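/- With the twisted comultiplication r on the free algebra 'f (as in Lusztig), the elements θ_iθ_j − θ_jθ_i for i·j = 0, and (q+q⁻¹)θ_iθ_jθ_i − θ_i²θ_j − θ_jθ_i² for i·j = −1, lie in the radical of the bilinear form (·,·) on 'f determined by: (1,1)=1, (θ_i,θ_j) = δ_{ij}(1−q²)⁻¹, (x, yy') = (r(x), y⊗y'), and (xx', y) = (x⊗x', r(y)). -/

import Mathlib

noncomputable section

/-- The ground field ℚ(q). -/
abbrev Qq : Type := RatFunc ℚ

/-- The variable q. -/
def qv : Qq := RatFunc.X

variable {I : Type} (G : SimpleGraph I) [DecidableEq I] [DecidableRel G.Adj]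

/-- The Cartan form: i·i = 2, i·j = −1 for adjacent vertices, 0 otherwise. -/
def cartan (i j : I) : ℤ := if i = j then 2 else if G.Adj i j then -1 else 0

/-- The pairing of the weights of two words: Σ_{i ∈ u, j ∈ v} i·j. -/
def pairWt (u v : List I) : ℤ := (u.map fun i => ((v.map fun j => cartan G i j).sum)).sum

/-- 'f, the free associative ℚ(q)-algebra on generators θ_i, i ∈ I, realized as the
monoid algebra of the free monoid on I (basis: the words in I). -/
abbrev FreeF (I : Type) : Type := MonoidAlgebra Qq (FreeMonoid I)

/-- The generator θ_i. -/
def θgen (i : I) : FreeF I := MonoidAlgebra.single (FreeMonoid.of i) 1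

/-- The underlying module of 'f ⊗ 'f, with basis the pairs of words. -/
abbrev FF2 (I : Type) : Type := (FreeMonoid I × FreeMonoid I) →₀ Qq

/-- The twisted multiplication on 'f ⊗ 'f:
(x₁⊗x₂)(x₁'⊗x₂') = q^{−|x₂|·|x₁'|} x₁x₁' ⊗ x₂x₂' on basis elements. -/
def tmul (f g : FF2 I) : FF2 I :=
  f.sum fun p cp => g.sum fun p' cp' =>
    Finsupp.single (p.1 * p'.1, p.2 * p'.2)
      (cp * cp' * qv ^ (-(pairWt G p.2.toList p'.1.toList)))

/-- The defining properties of the comultiplication r : 'f → 'f ⊗ 'f. -/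
def IsComult (r : FreeF I →ₗ[Qq] FF2 I) : Prop :=
  r 1 = Finsupp.single (1, 1) 1 ∧
  (∀ x y : FreeF I, r (x * y) = tmul G (r x) (r y)) ∧
  ∀ i : I, r (θgen i)
    = Finsupp.single (FreeMonoid.of i, 1) 1 + Finsupp.single (1, FreeMonoid.of i) 1

/-- The element y ⊗ y' of 'f ⊗ 'f. -/
def tens (y y' : FreeF I) : FF2 I :=
  y.coeff.sum fun w c => y'.coeff.sum fun w' c' => Finsupp.single (w, w') (c * c')

/-- The bilinear form on 'f ⊗ 'f induced by a bilinear form B on 'f: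
(x₁⊗x₂, y₁⊗y₂) = (x₁,y₁)(x₂,y₂). -/
def form2 (B : FreeF I →ₗ[Qq] FreeF I →ₗ[Qq] Qq) (f g : FF2 I) : Qq :=
  f.sum fun p c => g.sum fun p' c' =>
    c * c' * B (MonoidAlgebra.single p.1 1) (MonoidAlgebra.single p'.1 1)
      * B (MonoidAlgebra.single p.2 1) (MonoidAlgebra.single p'.2 1)
set_option synthInstance.maxHeartbeats 1000000
set_option maxHeartbeats 1000000
set_option linter.unusedSectionVars false
lemma fsingle_mul (w w' : FreeMonoid I) (c c' : Qq) :
    (MonoidAlgebra.single w c : FreeF I) * MonoidAlgebra.single w' c'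
      = MonoidAlgebra.single (w * w') (c * c') :=
  MonoidAlgebra.single_mul_single _ _ _ _

lemma tmul_single_single (p p' : FreeMonoid I × FreeMonoid I) (c c' : Qq) :
    tmul G (Finsupp.single p c) (Finsupp.single p' c') =
      Finsupp.single (p.1 * p'.1, p.2 * p'.2)
        (c * c' * qv ^ (-(pairWt G p.2.toList p'.1.toList))) := by
  unfold tmul
  rw [Finsupp.sum_single_index, Finsupp.sum_single_index] <;> simp

lemma tmul_add_left (f g h : FF2 I) : tmul G (f + g) h = tmul G f h + tmul G g h := by
  unfold tmul
  rw [Finsupp.sum_add_index'] <;> simp [add_mul, Finsupp.single_add, Finsupp.sum_add]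

lemma tmul_add_right (f g h : FF2 I) : tmul G f (g + h) = tmul G f g + tmul G f h := by
  unfold tmul
  rw [← Finsupp.sum_add]
  refine Finsupp.sum_congr fun p hp => ?_
  rw [Finsupp.sum_add_index'] <;> simp [mul_add, add_mul, Finsupp.single_add]

lemma tens_single (w w' : FreeMonoid I) (c c' : Qq) :
    tens (MonoidAlgebra.single w c : FreeF I) (MonoidAlgebra.single w' c') =
      Finsupp.single (w, w') (c * c') := by
  unfold tens
  rw [MonoidAlgebra.coeff_single, MonoidAlgebra.coeff_single]
  rw [Finsupp.sum_single_index, Finsupp.sum_single_index] <;> simp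

lemma form2_single_single (B : FreeF I →ₗ[Qq] FreeF I →ₗ[Qq] Qq)
    (p p' : FreeMonoid I × FreeMonoid I) (c c' : Qq) :
    form2 B (Finsupp.single p c) (Finsupp.single p' c') =
      c * c' * B (MonoidAlgebra.single p.1 1) (MonoidAlgebra.single p'.1 1)
        * B (MonoidAlgebra.single p.2 1) (MonoidAlgebra.single p'.2 1) := by
  unfold form2
  rw [Finsupp.sum_single_index, Finsupp.sum_single_index] <;> simp

lemma form2_add_left (B : FreeF I →ₗ[Qq] FreeF I →ₗ[Qq] Qq) (f g h : FF2 I) :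
    form2 B (f + g) h = form2 B f h + form2 B g h := by
  unfold form2
  rw [Finsupp.sum_add_index'] <;> simp [add_mul, Finsupp.sum_add]
lemma apply_eq_sum (L : FreeF I →ₗ[Qq] Qq) (y : FreeF I) :
    L y = y.coeff.sum fun w c => c * L (MonoidAlgebra.single w 1) := by
  conv_lhs => rw [← MonoidAlgebra.sum_coeff_single y]
  rw [map_finsuppSum]
  refine Finsupp.sum_congr fun w hw => ?_
  have h : (MonoidAlgebra.single w (y.coeff w) : FreeF I) = y.coeff w • MonoidAlgebra.single w 1 := by
    rw [MonoidAlgebra.smul_single', mul_one]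
  rw [h, map_smul, smul_eq_mul]

lemma horth_len (B : FreeF I →ₗ[Qq] FreeF I →ₗ[Qq] Qq)
    (horth : ∀ w w' : FreeMonoid I,
      (↑w.toList : Multiset I) ≠ (↑w'.toList : Multiset I) →
      B (MonoidAlgebra.single w 1) (MonoidAlgebra.single w' 1) = 0)
    (w w' : FreeMonoid I) (h : w.toList.length ≠ w'.toList.length) :
    B (MonoidAlgebra.single w 1) (MonoidAlgebra.single w' 1) = 0 := by
  refine horth w w' fun hc => h ?_
  have := congrArg Multiset.card hc
  simpa using this
lemma pair_classify {i j : I} (w : FreeMonoid I)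
    (h : (↑w.toList : Multiset I) = (↑[i, j] : Multiset I)) :
    w = FreeMonoid.of i * FreeMonoid.of j ∨ w = FreeMonoid.of j * FreeMonoid.of i := by
  rw [Multiset.coe_eq_coe] at h
  have hlen : w.toList.length = 2 := by simpa using h.length_eq
  obtain ⟨a, b, hab⟩ := List.length_eq_two.mp hlen
  have hw : w = FreeMonoid.of a * FreeMonoid.of b := by
    apply FreeMonoid.toList.injective
    simpa using hab
  subst hw
  simp only [FreeMonoid.toList_mul, FreeMonoid.toList_of, List.singleton_append] at h
  have ha : a = i ∨ a = j := by
    have := h.mem_iff.mp (show a ∈ [a, b] by simp)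
    simpa using this
  rcases ha with rfl | rfl
  · left
    have hb := h.cons_inv
    obtain rfl : b = j := by simpa using hb
    rfl
  · right
    have h2 := (h.trans (List.Perm.swap a i [])).cons_inv
    obtain rfl : b = i := by simpa using h2
    rfl
lemma triple_classify {i j : I} (hij : i ≠ j) (w : FreeMonoid I)
    (h : (↑w.toList : Multiset I) = (↑[i, i, j] : Multiset I)) :
    w = FreeMonoid.of i * FreeMonoid.of i * FreeMonoid.of j ∨
    w = FreeMonoid.of i * FreeMonoid.of j * FreeMonoid.of i ∨
    w = FreeMonoid.of j * FreeMonoid.of i * FreeMonoid.of i := by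
  rw [Multiset.coe_eq_coe] at h
  have hlen : w.toList.length = 3 := by simpa using h.length_eq
  obtain ⟨a, b, c, habc⟩ := List.length_eq_three.mp hlen
  have hw : w = FreeMonoid.of a * FreeMonoid.of b * FreeMonoid.of c := by
    apply FreeMonoid.toList.injective
    simpa using habc
  subst hw
  simp only [FreeMonoid.toList_mul, FreeMonoid.toList_of, List.singleton_append,
    List.append_assoc, List.cons_append, List.nil_append] at h
  have hmem : ∀ x ∈ [a, b, c], x = i ∨ x = j := by
    intro x hx
    have := h.mem_iff.mp hx
    simpa using this
  have hcj := h.count_eq j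
  have hci := h.count_eq i
  rcases hmem a (by simp) with rfl | rfl <;> rcases hmem b (by simp) with rfl | rfl <;>
      rcases hmem c (by simp) with rfl | rfl <;>
      simp_all [List.count_cons, hij, Ne.symm hij]
lemma T2 (r : FreeF I →ₗ[Qq] FF2 I) (hr : IsComult G r)
    (B : FreeF I →ₗ[Qq] FreeF I →ₗ[Qq] Qq)
    (horth : ∀ w w' : FreeMonoid I,
      (↑w.toList : Multiset I) ≠ (↑w'.toList : Multiset I) →
      B (MonoidAlgebra.single w 1) (MonoidAlgebra.single w' 1) = 0)
    (hmulR : ∀ x y y' : FreeF I, B x (y * y') = form2 B (r x) (tens y y'))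
    (a b c d : I) :
    B (MonoidAlgebra.single (FreeMonoid.of a * FreeMonoid.of b) 1)
      (MonoidAlgebra.single (FreeMonoid.of c * FreeMonoid.of d) 1)
    = B (θgen a) (θgen c) * B (θgen b) (θgen d)
      + qv ^ (-(cartan G a b)) * (B (θgen b) (θgen c) * B (θgen a) (θgen d)) := by
  obtain ⟨h1, hm, hg⟩ := hr
  have e2 : ∀ x y : I, (MonoidAlgebra.single (FreeMonoid.of x * FreeMonoid.of y) 1 : FreeF I)
      = θgen x * θgen y := by
    intro x y
    rw [θgen, θgen, fsingle_mul, one_mul]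
  rw [e2 c d, hmulR, e2 a b, hm, hg, hg]
  rw [show tens (θgen c) (θgen d) = Finsupp.single (FreeMonoid.of c, FreeMonoid.of d) 1 by
    rw [θgen, θgen, tens_single, one_mul]]
  rw [tmul_add_left, tmul_add_right, tmul_add_right, tmul_single_single, tmul_single_single,
    tmul_single_single, tmul_single_single, form2_add_left, form2_add_left, form2_add_left,
    form2_single_single, form2_single_single, form2_single_single, form2_single_single]
  simp only [one_mul, mul_one, FreeMonoid.toList_one, FreeMonoid.toList_of, pairWt,
    List.map_nil, List.sum_nil, List.map_cons, List.sum_cons, add_zero, neg_zero, zpow_zero,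
    neg_neg]
  have z1 : B (MonoidAlgebra.single (FreeMonoid.of a * FreeMonoid.of b) 1)
      (MonoidAlgebra.single (FreeMonoid.of c) 1) = 0 := by
    exact horth_len B horth _ _ (by simp)
  have z2 : B (MonoidAlgebra.single 1 1)
      (MonoidAlgebra.single (FreeMonoid.of c) 1) = 0 := by
    exact horth_len B horth _ _ (by simp)
  rw [z1, z2]
  simp only [θgen]
  ring
lemma T3 (r : FreeF I →ₗ[Qq] FF2 I) (hr : IsComult G r)
    (B : FreeF I →ₗ[Qq] FreeF I →ₗ[Qq] Qq)
    (horth : ∀ w w' : FreeMonoid I,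
      (↑w.toList : Multiset I) ≠ (↑w'.toList : Multiset I) →
      B (MonoidAlgebra.single w 1) (MonoidAlgebra.single w' 1) = 0)
    (hmulR : ∀ x y y' : FreeF I, B x (y * y') = form2 B (r x) (tens y y'))
    (a b c d e f : I) :
    B (MonoidAlgebra.single (FreeMonoid.of a * FreeMonoid.of b * FreeMonoid.of c) 1)
      (MonoidAlgebra.single (FreeMonoid.of d * FreeMonoid.of e * FreeMonoid.of f) 1)
    = B (MonoidAlgebra.single (FreeMonoid.of a * FreeMonoid.of b) 1)
          (MonoidAlgebra.single (FreeMonoid.of d * FreeMonoid.of e) 1) * B (θgen c) (θgen f)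
      + qv ^ (-(cartan G b c)) *
          (B (MonoidAlgebra.single (FreeMonoid.of a * FreeMonoid.of c) 1)
            (MonoidAlgebra.single (FreeMonoid.of d * FreeMonoid.of e) 1) * B (θgen b) (θgen f))
      + qv ^ (-(cartan G a b)) * qv ^ (-(cartan G a c)) *
          (B (MonoidAlgebra.single (FreeMonoid.of b * FreeMonoid.of c) 1)
            (MonoidAlgebra.single (FreeMonoid.of d * FreeMonoid.of e) 1) * B (θgen a) (θgen f)) := by
  obtain ⟨h1, hm, hg⟩ := hr
  have e3 : ∀ w : FreeMonoid I, ∀ z : I,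
      (MonoidAlgebra.single (w * FreeMonoid.of z) 1 : FreeF I)
        = MonoidAlgebra.single w 1 * θgen z := by
    intro w z
    rw [θgen, fsingle_mul, one_mul]
  have e2 : ∀ x y : I, (MonoidAlgebra.single (FreeMonoid.of x * FreeMonoid.of y) 1 : FreeF I)
      = θgen x * θgen y := by
    intro x y
    rw [θgen, θgen, fsingle_mul, one_mul]
  have htens : tens (MonoidAlgebra.single (FreeMonoid.of d * FreeMonoid.of e) 1 : FreeF I)
      (θgen f) = Finsupp.single (FreeMonoid.of d * FreeMonoid.of e, FreeMonoid.of f) 1 := by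
    rw [θgen, tens_single, one_mul]
  conv_lhs => rw [e3 (FreeMonoid.of d * FreeMonoid.of e) f, hmulR,
    e3 (FreeMonoid.of a * FreeMonoid.of b) c, hm, e2 a b, hm, hg, hg, hg, htens]
  simp only [tmul_add_left, tmul_add_right, tmul_single_single, form2_add_left,
    form2_single_single, one_mul, mul_one, FreeMonoid.toList_one, FreeMonoid.toList_of,
    FreeMonoid.toList_mul, pairWt, List.map_nil, List.sum_nil, List.map_cons, List.sum_cons,
    List.singleton_append, add_zero, neg_zero, zpow_zero, neg_neg]
  have z1 : B (MonoidAlgebra.single 1 1) (MonoidAlgebra.single (FreeMonoid.of f) 1) = 0 :=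
    horth_len B horth _ _ (by simp)
  have z2 : B (MonoidAlgebra.single 1 1)
      (MonoidAlgebra.single (FreeMonoid.of d * FreeMonoid.of e) 1) = 0 :=
    horth_len B horth _ _ (by simp)
  have z3 : ∀ x : I, B (MonoidAlgebra.single (FreeMonoid.of x) 1)
      (MonoidAlgebra.single (FreeMonoid.of d * FreeMonoid.of e) 1) = 0 := fun x =>
    horth_len B horth _ _ (by simp)
  simp only [z1, z2, z3, θgen, mul_zero, zero_mul, add_zero, zero_add]
  ring
lemma apply_eq_sum₂ (B : FreeF I →ₗ[Qq] FreeF I →ₗ[Qq] Qq) (y z : FreeF I) :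
    B y z = y.coeff.sum fun w c => c * B (MonoidAlgebra.single w 1) z := by
  have h := apply_eq_sum (B.flip z) y
  simpa [LinearMap.flip_apply] using h


/-- let r be the twisted comultiplication on 'f and B a bilinear form
satisfying: distinct weight spaces are orthogonal, (1,1) = 1,
(θ_i,θ_j) = δ_{ij}(1−q²)⁻¹, (x, yy') = (r(x), y⊗y'), (xx', y) = (x⊗x', r(y)).
Then for i·j = 0 the element θ_iθ_j − θ_jθ_i, and for i·j = −1 the element
(q+q⁻¹)θ_iθ_jθ_i − θ_i²θ_j − θ_jθ_i², lie in the radical of B. -/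
theorem serre_elements_in_radical
    (r : FreeF I →ₗ[Qq] FF2 I) (hr : IsComult G r)
    (B : FreeF I →ₗ[Qq] FreeF I →ₗ[Qq] Qq)
    (horth : ∀ w w' : FreeMonoid I,
      (↑w.toList : Multiset I) ≠ (↑w'.toList : Multiset I) →
      B (MonoidAlgebra.single w 1) (MonoidAlgebra.single w' 1) = 0)
    (hone : B 1 1 = 1)
    (hθ : ∀ i j : I, B (θgen i) (θgen j) = if i = j then (1 - qv ^ 2)⁻¹ else 0)
    (hmulR : ∀ x y y' : FreeF I, B x (y * y') = form2 B (r x) (tens y y'))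
    (hmulL : ∀ x x' y : FreeF I, B (x * x') y = form2 B (tens x x') (r y)) :
    ∀ i j : I, i ≠ j →
      (¬ G.Adj i j →
        (∀ y, B (θgen i * θgen j - θgen j * θgen i) y = 0) ∧
        (∀ y, B y (θgen i * θgen j - θgen j * θgen i) = 0)) ∧
      (G.Adj i j →
        (∀ y, B ((qv + qv⁻¹) • (θgen i * θgen j * θgen i)
            - θgen i * θgen i * θgen j - θgen j * θgen i * θgen i) y = 0) ∧
        (∀ y, B y ((qv + qv⁻¹) • (θgen i * θgen j * θgen i)
            - θgen i * θgen i * θgen j - θgen j * θgen i * θgen i) = 0)) := by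
  intro i j hij
  have hq0 : qv ≠ 0 := RatFunc.X_ne_zero
  have hc0 : (1 : Qq) - qv ^ 2 ≠ 0 := by
    rw [sub_ne_zero]
    intro heq
    have h2 : (1 : Polynomial ℚ) = Polynomial.X ^ 2 := by
      apply RatFunc.algebraMap_injective ℚ
      rw [map_one, map_pow, RatFunc.algebraMap_X]
      exact heq
    have := congrArg Polynomial.natDegree h2
    simp at this
  have hT2 := T2 G r hr B horth hmulR
  have hT3 := T3 G r hr B horth hmulR
  have eθ : ∀ x y : I, θgen x * θgen y
      = MonoidAlgebra.single (FreeMonoid.of x * FreeMonoid.of y) (1 : Qq) := by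
    intro x y; rw [θgen, θgen, fsingle_mul, one_mul]
  have eθ3 : ∀ x y z : I, θgen x * θgen y * θgen z
      = MonoidAlgebra.single (FreeMonoid.of x * FreeMonoid.of y * FreeMonoid.of z) (1 : Qq) := by
    intro x y z; rw [eθ, θgen, fsingle_mul, one_mul]
  have cii : cartan G i i = 2 := by simp [cartan]
  constructor
  · -- non-adjacent case
    intro hnadj
    have hnadj' : ¬ G.Adj j i := fun h => hnadj h.symm
    have cij : cartan G i j = 0 := by simp [cartan, hij, hnadj]
    have cji : cartan G j i = 0 := by simp [cartan, hij.symm, hnadj']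
    have hperm : (↑[j, i] : Multiset I) = (↑[i, j] : Multiset I) := by
      rw [Multiset.coe_eq_coe]; exact List.Perm.swap i j []
    have key : ∀ w : FreeMonoid I,
        B (θgen i * θgen j - θgen j * θgen i) (MonoidAlgebra.single w 1) = 0 ∧
        B (MonoidAlgebra.single w 1) (θgen i * θgen j - θgen j * θgen i) = 0 := by
      intro w
      by_cases h : (↑w.toList : Multiset I) = (↑[i, j] : Multiset I)
      · rcases pair_classify w h with rfl | rfl
        · constructor
          · rw [map_sub, LinearMap.sub_apply, eθ i j, eθ j i, hT2 i j i j, hT2 j i i j]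
            simp [hθ, hij, hij.symm, cij, cji]
          · rw [eθ i j, map_sub, eθ j i, hT2 i j i j, hT2 i j j i]
            simp [hθ, hij, hij.symm, cij, cji]
        · constructor
          · rw [map_sub, LinearMap.sub_apply, eθ i j, eθ j i, hT2 i j j i, hT2 j i j i]
            simp [hθ, hij, hij.symm, cij, cji]
          · rw [eθ j i, map_sub, eθ i j, hT2 j i i j, hT2 j i j i]
            simp [hθ, hij, hij.symm, cij, cji]
      · have n1 : (↑(FreeMonoid.of i * FreeMonoid.of j).toList : Multiset I)
            ≠ (↑w.toList : Multiset I) := by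
          simp only [FreeMonoid.toList_mul, FreeMonoid.toList_of, List.singleton_append]
          exact fun hc => h hc.symm
        have n2 : (↑(FreeMonoid.of j * FreeMonoid.of i).toList : Multiset I)
            ≠ (↑w.toList : Multiset I) := by
          simp only [FreeMonoid.toList_mul, FreeMonoid.toList_of, List.singleton_append]
          exact fun hc => h (hc.symm.trans hperm)
        have m1 : (↑w.toList : Multiset I)
            ≠ (↑(FreeMonoid.of i * FreeMonoid.of j).toList : Multiset I) := fun hc => n1 hc.symm
        have m2 : (↑w.toList : Multiset I)
            ≠ (↑(FreeMonoid.of j * FreeMonoid.of i).toList : Multiset I) := fun hc => n2 hc.symm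
        constructor
        · rw [map_sub, LinearMap.sub_apply, eθ i j, eθ j i, horth _ _ n1, horth _ _ n2, sub_zero]
        · rw [eθ i j, eθ j i, map_sub, horth _ _ m1, horth _ _ m2, sub_zero]
    constructor
    · intro y
      rw [apply_eq_sum (B (θgen i * θgen j - θgen j * θgen i)) y]
      exact Finset.sum_eq_zero fun w hw => by simp only [(key w).1, mul_zero]
    · intro y
      rw [apply_eq_sum₂ B y (θgen i * θgen j - θgen j * θgen i)]
      exact Finset.sum_eq_zero fun w hw => by simp only [(key w).2, mul_zero]
  · -- adjacent case
    intro hadj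
    have hadj' : G.Adj j i := hadj.symm
    have cij : cartan G i j = -1 := by simp [cartan, hij, hadj]
    have cji : cartan G j i = -1 := by simp [cartan, hij.symm, hadj']
    have hperm1 : (↑[i, j, i] : Multiset I) = (↑[i, i, j] : Multiset I) := by
      rw [Multiset.coe_eq_coe]
      exact List.Perm.cons i (List.Perm.swap i j [])
    have hperm2 : (↑[j, i, i] : Multiset I) = (↑[i, i, j] : Multiset I) := by
      rw [Multiset.coe_eq_coe]
      exact (List.Perm.swap i j [i]).trans (List.Perm.cons i (List.Perm.swap i j []))
    set z3 : FreeF I := (qv + qv⁻¹) • (θgen i * θgen j * θgen i)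
        - θgen i * θgen i * θgen j - θgen j * θgen i * θgen i with hz3
    have key : ∀ w : FreeMonoid I,
        B z3 (MonoidAlgebra.single w 1) = 0 ∧
        B (MonoidAlgebra.single w 1) z3 = 0 := by
      intro w
      by_cases h : (↑w.toList : Multiset I) = (↑[i, i, j] : Multiset I)
      · rcases triple_classify hij w h with rfl | rfl | rfl <;>
          constructor <;>
          · simp only [hz3, map_sub, map_smul, LinearMap.sub_apply, LinearMap.smul_apply,
              smul_eq_mul, eθ3 i j i, eθ3 i i j, eθ3 j i i]
            simp only [hT3, hT2, hθ, cii, cij, cji, if_pos rfl, if_neg hij, if_neg hij.symm,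
              eq_self_iff_true, if_true]
            simp only [neg_neg, neg_zero, zpow_zero, zpow_one, mul_zero, zero_mul, add_zero,
              zero_add, mul_one, one_mul]
            have hzp : qv ^ (-(2:ℤ)) = (qv ^ (2:ℕ))⁻¹ := by
              rw [zpow_neg]
              norm_cast
            simp only [hzp]
            generalize (1 - qv ^ (2:ℕ))⁻¹ = c
            have h2 : qv ^ (2:ℕ) ≠ 0 := pow_ne_zero _ hq0
            field_simp [h2]
            ring
      · have n0 : ∀ u : FreeMonoid I, (↑u.toList : Multiset I) = (↑[i, i, j] : Multiset I) →
            B (MonoidAlgebra.single u 1) (MonoidAlgebra.single w 1) = 0 ∧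
            B (MonoidAlgebra.single w 1) (MonoidAlgebra.single u 1) = 0 := by
          intro u hu
          constructor
          · exact horth _ _ (fun hc => h ((hc.symm.trans hu)))
          · exact horth _ _ (fun hc => h (hc.trans hu))
        have t1 : (↑(FreeMonoid.of i * FreeMonoid.of j * FreeMonoid.of i).toList : Multiset I)
            = (↑[i, i, j] : Multiset I) := by
          simp only [FreeMonoid.toList_mul, FreeMonoid.toList_of, List.singleton_append,
            List.cons_append, List.nil_append]
          exact hperm1
        have t2 : (↑(FreeMonoid.of i * FreeMonoid.of i * FreeMonoid.of j).toList : Multiset I)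
            = (↑[i, i, j] : Multiset I) := by
          simp only [FreeMonoid.toList_mul, FreeMonoid.toList_of, List.singleton_append,
            List.cons_append, List.nil_append]
        have t3 : (↑(FreeMonoid.of j * FreeMonoid.of i * FreeMonoid.of i).toList : Multiset I)
            = (↑[i, i, j] : Multiset I) := by
          simp only [FreeMonoid.toList_mul, FreeMonoid.toList_of, List.singleton_append,
            List.cons_append, List.nil_append]
          exact hperm2
        constructor
        · simp only [hz3, map_sub, map_smul, LinearMap.sub_apply, LinearMap.smul_apply,
            smul_eq_mul, eθ3 i j i, eθ3 i i j, eθ3 j i i,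
            (n0 _ t1).1, (n0 _ t2).1, (n0 _ t3).1, mul_zero, sub_zero]
        · simp only [hz3, map_sub, map_smul, smul_eq_mul, eθ3 i j i, eθ3 i i j, eθ3 j i i,
            (n0 _ t1).2, (n0 _ t2).2, (n0 _ t3).2, mul_zero, sub_zero]
    constructor
    · intro y
      rw [apply_eq_sum (B z3) y]
      exact Finset.sum_eq_zero fun w hw => by simp only [(key w).1, mul_zero]
    · intro y
      rw [apply_eq_sum₂ B y z3]
      exact Finset.sum_eq_zero fun w hw => by simp only [(key w).2, mul_zero]

end
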